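/- Fix an integer J ≥ 2. Let X = {X_t}_{t∈[0,1]} be a random element of C[0,1], and for t ∈ [0,1] let F_t denote the distribution function of X_t. Then for every x = {x_t}_{t∈[0,1]} ∈ C[0,1]: MBD(x) = ∑_{j=2}^J ∫_0^1 [ 1 − P(X_t < x_t)^j − P(X_t > x_t)^j ] dt and MHRD(x) = min{ ∫_0^1 P(X_t ≤ x_t) dt, ∫_0^1 P(X_t ≥ x_t) dt }. -/

import Mathlib

set_option synthInstance.maxHeartbeats 400000

open MeasureTheory ENNReal

/-- The unit interval `[0,1]` as a type. -/
abbrev unitI : Type := Set.Icc (0 : ℝ) 1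

/-- The modified band depth of `x ∈ C[0,1]` with respect to a probability measure `μ` on
`C[0,1]`, with `J` independent copies (realized via the product measure `μ^{⊗J}`):
`MBD(x) = ∑_{j=2}^J E[λ({t : min_{1≤i≤j} X_{i,t} ≤ x_t ≤ max_{1≤i≤j} X_{i,t}})]`. -/
noncomputable def modBandDepth [MeasurableSpace C(unitI, ℝ)]
    (μ : Measure C(unitI, ℝ)) [SigmaFinite μ] (J : ℕ) (x : C(unitI, ℝ)) : ℝ :=
  ∑ j ∈ Finset.Icc 2 J, ∫ ω, (volume {t : unitI |
      (∃ i : Fin J, (i : ℕ) < j ∧ ω i t ≤ x t) ∧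
      (∃ i : Fin J, (i : ℕ) < j ∧ x t ≤ ω i t)}).toReal
    ∂(Measure.pi fun _ : Fin J => μ)

/-- The modified half-region depth of `x ∈ C[0,1]` with respect to a probability measure `μ`
on `C[0,1]`: `MHRD(x) = min{ E[λ({t : X_t ≤ x_t})], E[λ({t : X_t ≥ x_t})] }`. -/
noncomputable def modHalfRegionDepth [MeasurableSpace C(unitI, ℝ)]
    (μ : Measure C(unitI, ℝ)) (x : C(unitI, ℝ)) : ℝ :=
  min (∫ z, (volume {t : unitI | z t ≤ x t}).toReal ∂μ)
      (∫ z, (volume {t : unitI | x t ≤ z t}).toReal ∂μ)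

/-- Fubini swap for sections of a measurable set in `α × unitI`. -/
lemma swap_lemma' {α : Type*} [MeasurableSpace α] (ν : Measure α) [IsFiniteMeasure ν]
    (S : Set (α × unitI)) (hS : MeasurableSet S) :
    ∫ a, (volume (Prod.mk a ⁻¹' S)).toReal ∂ν
      = ∫ t : unitI, (ν ((fun a => (a, t)) ⁻¹' S)).toReal := by
  rw [integral_toReal (measurable_measure_prodMk_left hS).aemeasurable
      (ae_of_all _ fun a => lt_of_le_of_lt (measure_mono (Set.subset_univ _)) (measure_lt_top _ _)),
    integral_toReal (measurable_measure_prodMk_right hS).aemeasurable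
      (ae_of_all _ fun t => lt_of_le_of_lt (measure_mono (Set.subset_univ _)) (measure_lt_top _ _)),
    ← Measure.prod_apply hS, Measure.prod_apply_symm hS]

lemma card_filter_lt' (J j : ℕ) (hjJ : j ≤ J) :
    (Finset.univ.filter fun i : Fin J => (i : ℕ) < j).card = j := by
  refine Finset.card_eq_of_bijective (fun k hk => ⟨k, lt_of_lt_of_le hk hjJ⟩) ?_ ?_ ?_
  · intro a ha
    simp only [Finset.mem_filter] at ha
    exact ⟨a, ha.2, rfl⟩
  · intro i h
    simp [h]
  · intro i j hi hj h
    simpa [Fin.ext_iff] using h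

lemma pi_forall_lt' {C : Type*} [MeasurableSpace C] (μ : Measure C) [IsProbabilityMeasure μ]
    (J j : ℕ) (hjJ : j ≤ J) (B : Set C) :
    Measure.pi (fun _ : Fin J => μ) {ω : Fin J → C | ∀ i : Fin J, (i : ℕ) < j → ω i ∈ B}
      = μ B ^ j := by
  have h : {ω : Fin J → C | ∀ i : Fin J, (i : ℕ) < j → ω i ∈ B}
      = Set.univ.pi (fun i : Fin J => if (i : ℕ) < j then B else Set.univ) := by
    ext ω
    simp only [Set.mem_setOf_eq, Set.mem_pi, Set.mem_univ, true_implies]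
    constructor
    · intro h i; split_ifs with hi
      · exact h i hi
      · trivial
    · intro h i hi; have := h i; rwa [if_pos hi] at this
  rw [h, Measure.pi_pi]
  have h2 : ∀ i : Fin J, μ (if (i : ℕ) < j then B else Set.univ)
      = if (i : ℕ) < j then μ B else 1 := by
    intro i; split_ifs <;> simp
  simp_rw [h2]
  rw [Finset.prod_ite (fun _ => μ B) (fun _ => (1 : ℝ≥0∞))]
  simp [card_filter_lt' J j hjJ]

lemma section_measure' {C : Type*} [MeasurableSpace C] (μ : Measure C) [IsProbabilityMeasure μ]
    (J j : ℕ) (hj2 : 2 ≤ j) (hjJ : j ≤ J) (f : C → ℝ) (hf : Measurable f) (c : ℝ) :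
    ((Measure.pi fun _ : Fin J => μ) {ω : Fin J → C |
        (∃ i : Fin J, (i : ℕ) < j ∧ f (ω i) ≤ c) ∧
        (∃ i : Fin J, (i : ℕ) < j ∧ c ≤ f (ω i))}).toReal
      = 1 - (μ {z | f z < c}).toReal ^ j - (μ {z | c < f z}).toReal ^ j := by
  set ν := Measure.pi fun _ : Fin J => μ with hν
  set A := {ω : Fin J → C | (∃ i : Fin J, (i : ℕ) < j ∧ f (ω i) ≤ c) ∧
      (∃ i : Fin J, (i : ℕ) < j ∧ c ≤ f (ω i))} with hA
  set U := {ω : Fin J → C | ∀ i : Fin J, (i : ℕ) < j → ω i ∈ {z | c < f z}} with hU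
  set V := {ω : Fin J → C | ∀ i : Fin J, (i : ℕ) < j → ω i ∈ {z | f z < c}} with hV
  have hmeval : ∀ i : Fin J, Measurable fun ω : Fin J → C => f (ω i) :=
    fun i => hf.comp (measurable_pi_apply i)
  have hAm : MeasurableSet A := by
    have hrep : A = (⋃ i : Fin J, ⋃ _ : (i : ℕ) < j, {ω : Fin J → C | f (ω i) ≤ c}) ∩
        (⋃ i : Fin J, ⋃ _ : (i : ℕ) < j, {ω : Fin J → C | c ≤ f (ω i)}) := by
      ext ω; simp [hA, Set.mem_iUnion]
    rw [hrep]
    exact ((MeasurableSet.iUnion fun i => MeasurableSet.iUnion fun _ =>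
        (hmeval i) measurableSet_Iic)).inter
      (MeasurableSet.iUnion fun i => MeasurableSet.iUnion fun _ =>
        (hmeval i) measurableSet_Ici)
  have hUrep : U = ⋂ i : Fin J, ⋂ _ : (i : ℕ) < j, {ω : Fin J → C | c < f (ω i)} := by
    ext ω; simp [hU, Set.mem_iInter]
  have hVrep : V = ⋂ i : Fin J, ⋂ _ : (i : ℕ) < j, {ω : Fin J → C | f (ω i) < c} := by
    ext ω; simp [hV, Set.mem_iInter]
  have hUm : MeasurableSet U := by
    rw [hUrep]
    exact MeasurableSet.iInter fun i => MeasurableSet.iInter fun _ => (hmeval i) measurableSet_Ioi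
  have hVm : MeasurableSet V := by
    rw [hVrep]
    exact MeasurableSet.iInter fun i => MeasurableSet.iInter fun _ => (hmeval i) measurableSet_Iio
  have hcompl : Aᶜ = U ∪ V := by
    ext ω
    constructor
    · intro h
      rcases not_and_or.mp h with hE | hF
      · push_neg at hE
        exact Or.inl fun i hi => hE i hi
      · push_neg at hF
        exact Or.inr fun i hi => hF i hi
    · rintro (h | h) ⟨⟨i1, hi1, hle⟩, ⟨i2, hi2, hge⟩⟩
      · exact absurd hle (not_le.mpr (h i1 hi1))
      · exact absurd hge (not_le.mpr (h i2 hi2))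
  have hdisj : Disjoint U V := by
    rw [Set.disjoint_left]
    intro ω hUω hVω
    have hJ0 : 0 < J := by omega
    have h1 := hUω ⟨0, hJ0⟩ (by simpa using (by omega : 0 < j))
    have h2 := hVω ⟨0, hJ0⟩ (by simpa using (by omega : 0 < j))
    simp only [Set.mem_setOf_eq] at h1 h2
    linarith
  have hsum : (ν A).toReal + (ν Aᶜ).toReal = 1 := by
    rw [← ENNReal.toReal_add (measure_ne_top _ _) (measure_ne_top _ _),
      measure_add_measure_compl hAm, measure_univ, ENNReal.toReal_one]
  have hAc : (ν Aᶜ).toReal = (μ {z | c < f z}).toReal ^ j + (μ {z | f z < c}).toReal ^ j := by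
    rw [hcompl, measure_union hdisj hVm,
      ENNReal.toReal_add (measure_ne_top _ _) (measure_ne_top _ _),
      hU, hV, pi_forall_lt' μ J j hjJ, pi_forall_lt' μ J j hjJ, ENNReal.toReal_pow,
      ENNReal.toReal_pow]
  linarith

/-- The Fubini representations (3.3) and (3.4): for a random element `X` of `C[0,1]` with law
`μ`, `MBD(x) = ∑_{j=2}^J ∫_0^1 [1 − P(X_t < x_t)^j − P(X_t > x_t)^j] dt` and
`MHRD(x) = min{ ∫_0^1 P(X_t ≤ x_t) dt, ∫_0^1 P(X_t ≥ x_t) dt }`. -/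
theorem modBandDepth_and_modHalfRegionDepth_repr
    [MeasurableSpace C(unitI, ℝ)] [BorelSpace C(unitI, ℝ)]
    (J : ℕ) (hJ : 2 ≤ J)
    (μ : Measure C(unitI, ℝ)) [IsProbabilityMeasure μ] (x : C(unitI, ℝ)) :
    (modBandDepth μ J x = ∑ j ∈ Finset.Icc 2 J, ∫ t : unitI,
        (1 - (μ {z | z t < x t}).toReal ^ j - (μ {z | x t < z t}).toReal ^ j)) ∧
    (modHalfRegionDepth μ x = min (∫ t : unitI, (μ {z | z t ≤ x t}).toReal)
        (∫ t : unitI, (μ {z | x t ≤ z t}).toReal)) := by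
  have heval : Measurable fun p : C(unitI, ℝ) × unitI => p.1 p.2 :=
    (ContinuousEval.continuous_eval).measurable
  have hxm : Measurable fun p : C(unitI, ℝ) × unitI => x p.2 :=
    (x.continuous.comp continuous_snd).measurable
  constructor
  · -- MBD
    unfold modBandDepth
    refine Finset.sum_congr rfl fun j hj => ?_
    obtain ⟨hj2, hjJ⟩ := Finset.mem_Icc.mp hj
    set ν := Measure.pi fun _ : Fin J => μ with hν
    set S : Set ((Fin J → C(unitI, ℝ)) × unitI) := {p |
        (∃ i : Fin J, (i : ℕ) < j ∧ p.1 i p.2 ≤ x p.2) ∧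
        (∃ i : Fin J, (i : ℕ) < j ∧ x p.2 ≤ p.1 i p.2)} with hS
    have hg : ∀ i : Fin J, Measurable fun p : (Fin J → C(unitI, ℝ)) × unitI => p.1 i p.2 := by
      intro i
      have hrw : (fun p : (Fin J → C(unitI, ℝ)) × unitI => p.1 i p.2)
          = (fun q : C(unitI, ℝ) × unitI => q.1 q.2) ∘ (fun p => (p.1 i, p.2)) := rfl
      rw [hrw]
      exact heval.comp (((measurable_pi_apply i).comp measurable_fst).prodMk measurable_snd)
    have hxm2 : Measurable fun p : (Fin J → C(unitI, ℝ)) × unitI => x p.2 :=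
      (x.continuous.comp continuous_snd).measurable
    have hSm : MeasurableSet S := by
      have hrep : S = (⋃ i : Fin J, ⋃ _ : (i : ℕ) < j,
            {p : (Fin J → C(unitI, ℝ)) × unitI | p.1 i p.2 ≤ x p.2}) ∩
          (⋃ i : Fin J, ⋃ _ : (i : ℕ) < j,
            {p : (Fin J → C(unitI, ℝ)) × unitI | x p.2 ≤ p.1 i p.2}) := by
        ext p; simp [hS, Set.mem_iUnion]
      rw [hrep]
      exact ((MeasurableSet.iUnion fun i => MeasurableSet.iUnion fun _ =>
          measurableSet_le (hg i) hxm2)).inter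
        (MeasurableSet.iUnion fun i => MeasurableSet.iUnion fun _ =>
          measurableSet_le hxm2 (hg i))
    have hswap := swap_lemma' ν S hSm
    rw [show (∫ ω, (volume {t : unitI |
        (∃ i : Fin J, (i : ℕ) < j ∧ ω i t ≤ x t) ∧
        (∃ i : Fin J, (i : ℕ) < j ∧ x t ≤ ω i t)}).toReal ∂ν)
      = ∫ a, (volume (Prod.mk a ⁻¹' S)).toReal ∂ν from rfl, hswap]
    refine integral_congr_ae (Filter.Eventually.of_forall fun t => ?_)
    exact section_measure' μ J j hj2 hjJ (fun z => z t)
      (ContinuousEvalConst.continuous_eval_const t).measurable (x t)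
  · -- MHRD
    unfold modHalfRegionDepth
    have h1 : MeasurableSet {p : C(unitI, ℝ) × unitI | p.1 p.2 ≤ x p.2} :=
      measurableSet_le heval hxm
    have h2 : MeasurableSet {p : C(unitI, ℝ) × unitI | x p.2 ≤ p.1 p.2} :=
      measurableSet_le hxm heval
    have e1 := swap_lemma' μ _ h1
    have e2 := swap_lemma' μ _ h2
    rw [show (∫ z, (volume {t : unitI | z t ≤ x t}).toReal ∂μ)
      = ∫ a, (volume (Prod.mk a ⁻¹' {p : C(unitI, ℝ) × unitI | p.1 p.2 ≤ x p.2})).toReal ∂μ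
      from rfl, e1]
    rw [show (∫ z, (volume {t : unitI | x t ≤ z t}).toReal ∂μ)
      = ∫ a, (volume (Prod.mk a ⁻¹' {p : C(unitI, ℝ) × unitI | x p.2 ≤ p.1 p.2})).toReal ∂μ
      from rfl, e2]
    rfl
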